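/- The GR(1) projection procedure yields a weaker formula: let φ = ⋀_{i≤n}□◇φᵢ ⟹ ⋀_{j≤m}□◇γⱼ be a GR(1) formula over Σ with each φᵢ and γⱼ a boolean combination of atomic events in conjunctive normal form, and let L ⊆ Σ. Let α be the formula obtained from φ by, for every event l ∈ L, replacing every occurrence of the literals l and ¬l by false in each φᵢ and by true in each γⱼ. Then every infinite trace π ∈ Σ^ω with π ⊨ φ also satisfies π ⊨ α. -/

import Mathlib

namespace CompSynth

/-- A labelled transition system over event labels `E`. -/
structure LTS (E : Type) where
  State : Type
  finState : Finite State
  alph : Finset E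
  trans : State → E → State → Prop
  init : State

namespace LTS

variable {E : Type} [DecidableEq E]

/-- Parallel composition of two LTSs. -/
def par (M N : LTS E) : LTS E where
  State := M.State × N.State
  finState := by haveI := M.finState; haveI := N.finState; exact inferInstance
  alph := M.alph ∪ N.alph
  trans := fun s l t =>
    (M.trans s.1 l t.1 ∧ l ∈ M.alph ∧ l ∉ N.alph ∧ t.2 = s.2) ∨
    (N.trans s.2 l t.2 ∧ l ∈ N.alph ∧ l ∉ M.alph ∧ t.1 = s.1) ∨
    (M.trans s.1 l t.1 ∧ N.trans s.2 l t.2 ∧ l ∈ M.alph ∧ l ∈ N.alph)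
  init := (M.init, N.init)

/-- The trivial (one-state, empty-alphabet) LTS. -/
def unitLTS : LTS E where
  State := Unit
  finState := inferInstance
  alph := ∅
  trans := fun _ _ _ => False
  init := ()

/-- Parallel composition of a finite list of LTSs. -/
def parList : List (LTS E) → LTS E
  | [] => unitLTS
  | [M] => M
  | M :: Ms => M.par (parList Ms)

/-- Reachable states of an LTS. -/
inductive Reach (M : LTS E) : M.State → Prop
  | init : Reach M M.init
  | step {s l t} : Reach M s → M.trans s l t → Reach M t

/-- Finite runs (paths) between states, labelled by a word. -/
inductive Path (M : LTS E) : M.State → List E → M.State → Prop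
  | nil (s : M.State) : Path M s [] s
  | cons {s t u : M.State} {l : E} {w : List E} :
      M.trans s l t → Path M t w u → Path M s (l :: w) u

/-- Finite traces of an LTS. -/
def FinTr (M : LTS E) (w : List E) : Prop := ∃ s, Path M M.init w s

/-- Infinite traces of an LTS. -/
def InfTr (M : LTS E) (π : ℕ → E) : Prop :=
  ∃ ρ : ℕ → M.State, ρ 0 = M.init ∧ ∀ i, M.trans (ρ i) (π i) (ρ (i + 1))

/-- No state has two outgoing transitions with the same label. -/
def Deterministic (M : LTS E) : Prop :=
  ∀ s l t t', M.trans s l t → M.trans s l t' → t = t'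

/-- Every reachable state has an outgoing transition. -/
def DeadlockFree (M : LTS E) : Prop :=
  ∀ s, Reach M s → ∃ l t, M.trans s l t

/-- `C` is legal for `M` w.r.t. the uncontrollable events `Eu`. -/
def Legal (M C : LTS E) (Eu : Finset E) : Prop :=
  ∀ p : (M.par C).State, Reach (M.par C) p → ∀ l ∈ Eu,
    ((∃ q, (M.par C).trans p l q) ↔ (∃ t, M.trans p.1 l t))

/-- Restriction of an LTS to a set of states containing the initial state. -/
def restrict (M : LTS E) (S' : Set M.State) (h : M.init ∈ S') : LTS E where
  State := {s // s ∈ S'}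
  finState := by haveI := M.finState; exact inferInstance
  alph := M.alph
  trans := fun x l y => M.trans x.1 l y.1
  init := ⟨M.init, h⟩

/-- The controlled subplant of `M` by the safe controller `restrict M S' h`
with respect to the uncontrolled shared events `Ω`: transitions of the safe
controller together with transitions to a fresh deadlock state `⊥` (here `none`)
on events of `Ω` enabled in `M` but removed by the safe controller. -/
def ctrlSub (M : LTS E) (S' : Set M.State) (h : M.init ∈ S') (Ω : Finset E) : LTS E where
  State := Option {s // s ∈ S'}
  finState := by
    haveI := M.finState
    haveI := Fintype.ofFinite M.State
    haveI : Finite {s // s ∈ S'} := inferInstance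
    haveI := Fintype.ofFinite {s // s ∈ S'}
    exact inferInstance
  alph := M.alph
  trans := fun x l y =>
    match x, y with
    | some a, some b => M.trans a.1 l b.1
    | some a, none =>
        l ∈ Ω ∧ (∃ t, M.trans a.1 l t) ∧ ∀ t, t ∈ S' → ¬ M.trans a.1 l t
    | none, _ => False
  init := some ⟨M.init, h⟩

/-- Quotient LTS by a relation on states. -/
def quot (M : LTS E) (r : M.State → M.State → Prop) : LTS E where
  State := Quot r
  finState := by
    haveI := M.finState
    exact Finite.of_surjective (Quot.mk r) (fun q => Quot.exists_rep q)
  alph := M.alph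
  trans := fun qs l qt => ∃ s t, M.trans s l t ∧ Quot.mk r s = qs ∧ Quot.mk r t = qt
  init := Quot.mk r M.init

/-- Removal of self-loop transitions labelled by events in `μs`. -/
def rmLoops (P : LTS E) (μs : Finset E) : LTS E :=
  { P with trans := fun s l t => P.trans s l t ∧ ¬(l ∈ μs ∧ t = s) }

/-- Synthesis observational equivalence on `M` w.r.t. local events `Υ`,
with controllable events `Ec` (uncontrollable events are those not in `Ec`). -/
def IsSOE (M : LTS E) (Ec Υ : Finset E) (r : M.State → M.State → Prop) : Prop :=
  Equivalence r ∧
  (∀ x₁ x₂ y₁ u, r x₁ x₂ → u ∈ M.alph → u ∉ Ec → M.trans x₁ u y₁ →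
    ∃ (π₁ π₂ : List E) (y₂ : M.State),
      (∀ l ∈ π₁, l ∈ Υ ∧ l ∉ Ec) ∧ (∀ l ∈ π₂, l ∈ Υ ∧ l ∉ Ec) ∧
      Path M x₂ (π₁ ++ (if u ∈ Υ then [] else [u]) ++ π₂) y₂ ∧ r y₁ y₂) ∧
  (∀ x₁ x₂ y₁ c, r x₁ x₂ → c ∈ Ec → M.trans x₁ c y₁ →
    ∃ (n : ℕ) (xs : Fin (n + 1) → M.State) (τ : Fin n → E) (y₂ : M.State),
      xs 0 = x₂ ∧
      (∀ i : Fin n, M.trans (xs i.castSucc) (τ i) (xs i.succ) ∧ τ i ∈ Υ ∧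
        (τ i ∈ Ec → r x₁ (xs i.succ))) ∧
      (if c ∈ Υ then y₂ = xs (Fin.last n) else M.trans (xs (Fin.last n)) c y₂) ∧
      r y₁ y₂)

/-- `l` is a self-loop event added by the `r`-reduction of `M`. -/
def SelfLoopAdded (M : LTS E) (r : M.State → M.State → Prop) (l : E) : Prop :=
  ∃ s t, M.trans s l t ∧ r s t ∧ s ≠ t

end LTS

/-- Syntax of LTL formulas over atomic events in `E`. -/
inductive LTL (E : Type) where
  | tru : LTL E
  | atom : E → LTL E
  | neg : LTL E → LTL E
  | orf : LTL E → LTL E → LTL E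
  | next : LTL E → LTL E
  | untl : LTL E → LTL E → LTL E

namespace LTL

variable {E : Type}

/-- Satisfaction of an LTL formula by an infinite trace at a position. -/
def satAt (π : ℕ → E) : LTL E → ℕ → Prop
  | tru, _ => True
  | atom e, i => π i = e
  | neg φ, i => ¬ satAt π φ i
  | orf φ ψ, i => satAt π φ i ∨ satAt π ψ i
  | next φ, i => satAt π φ (i + 1)
  | untl φ ψ, i => ∃ k, i ≤ k ∧ satAt π ψ k ∧ ∀ j, i ≤ j → j < k → satAt π φ j

/-- Satisfaction of an LTL formula by an infinite trace. -/
def sat (π : ℕ → E) (φ : LTL E) : Prop := satAt π φ 0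

def fls : LTL E := neg tru
def andf (φ ψ : LTL E) : LTL E := neg (orf (neg φ) (neg ψ))
def imp (φ ψ : LTL E) : LTL E := orf (neg φ) ψ
def ev (φ : LTL E) : LTL E := untl tru φ
def alw (φ : LTL E) : LTL E := neg (ev (neg φ))
def alwEv (φ : LTL E) : LTL E := alw (ev φ)
def conjList (l : List (LTL E)) : LTL E := l.foldr andf tru
def disjList (l : List (LTL E)) : LTL E := l.foldr orf fls

/-- The atomic events occurring in a formula. -/
def events [DecidableEq E] : LTL E → Finset E
  | tru => ∅
  | atom e => {e}
  | neg φ => events φ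
  | orf φ ψ => events φ ∪ events ψ
  | next φ => events φ
  | untl φ ψ => events φ ∪ events ψ

/-- Boolean combinations of atomic events (no temporal operators). -/
def isBool : LTL E → Prop
  | tru => True
  | atom _ => True
  | neg φ => isBool φ
  | orf φ ψ => isBool φ ∧ isBool ψ
  | next _ => False
  | untl _ _ => False

end LTL

variable {E : Type} [DecidableEq E]

/-- The GR(1) formula `⋀ □◇aᵢ ⟹ ⋀ □◇gⱼ`. -/
def GR1 (As Gs : List (LTL E)) : LTL E :=
  LTL.imp (LTL.conjList (As.map LTL.alwEv)) (LTL.conjList (Gs.map LTL.alwEv))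

/-- The boolean formula `⋀_{l ∈ μ} ¬l`. -/
noncomputable def finsetNegConj (μ : Finset E) : LTL E :=
  LTL.conjList (μ.toList.map fun l => LTL.neg (LTL.atom l))

/-- The formula `□◇(⋀_{l ∈ μ} ¬l) ⟹ φ`. -/
noncomputable def muGoal (μ : Finset E) (φ : LTL E) : LTL E :=
  LTL.imp (LTL.alwEv (finsetNegConj μ)) φ

open LTS

/-- `C` is a solution of the control problem `⟨P, Ec, φ⟩`. -/
def Solution (P : LTS E) (Ec : Finset E) (φ : LTL E) (C : LTS E) : Prop :=
  Deterministic C ∧ Legal P C (P.alph \ Ec) ∧ DeadlockFree (P.par C) ∧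
  ∀ π : ℕ → E, InfTr (P.par C) π → LTL.sat π φ

/-- `s` is a winning state of the control problem `⟨P, Ec, φ⟩`. -/
def Winning (P : LTS E) (Ec : Finset E) (φ : LTL E) (s : P.State) : Prop :=
  ∃ C : LTS E, Solution P Ec φ C ∧ ∃ c : C.State, Reach (C.par P) (c, s)

/-- Controllers of the synthesis tuple `(Ms, Cs, μ)`. -/
def Cont (Ec : Finset E) (φ : LTL E) (Ms Cs : List (LTS E)) (μ : Finset E) :
    Set (LTS E) :=
  { X | ∃ CM : LTS E, Solution (parList Ms) Ec (muGoal μ φ) CM ∧ X = parList (CM :: Cs) }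


/-- A literal: an event together with its polarity. -/
def litToLTL (lit : E × Bool) : LTL E :=
  if lit.2 then LTL.atom lit.1 else LTL.neg (LTL.atom lit.1)

/-- A clause (disjunction of literals) as an LTL formula. -/
def clauseToLTL (cl : List (E × Bool)) : LTL E := LTL.disjList (cl.map litToLTL)

/-- A boolean combination of events in conjunctive normal form, as an LTL formula. -/
def cnfToLTL (c : List (List (E × Bool))) : LTL E := LTL.conjList (c.map clauseToLTL)

/-- Replace, in an assumption, every literal over an event of `L` by `false`
(i.e. delete the literal from its clause). -/
def projAssum (L : Finset E) (c : List (List (E × Bool))) : List (List (E × Bool)) :=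
  c.map fun cl => cl.filter fun lit => decide (lit.1 ∉ L)

/-- Replace, in a guarantee, every literal over an event of `L` by `true`
(i.e. delete every clause containing such a literal). -/
def projGuar (L : Finset E) (c : List (List (E × Bool))) : List (List (E × Bool)) :=
  c.filter fun cl => cl.all fun lit => decide (lit.1 ∉ L)

lemma satAt_andf (π : ℕ → E) (φ ψ : LTL E) (i : ℕ) :
    LTL.satAt π (LTL.andf φ ψ) i ↔ LTL.satAt π φ i ∧ LTL.satAt π ψ i := by
  simp [LTL.andf, LTL.satAt]

lemma satAt_conjList (π : ℕ → E) (l : List (LTL E)) (i : ℕ) :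
    LTL.satAt π (LTL.conjList l) i ↔ ∀ φ ∈ l, LTL.satAt π φ i := by
  induction l with
  | nil => simp [LTL.conjList, LTL.satAt]
  | cons a t ih =>
      simp only [LTL.conjList, List.foldr] at ih ⊢
      rw [satAt_andf, ih]; simp

lemma satAt_disjList (π : ℕ → E) (l : List (LTL E)) (i : ℕ) :
    LTL.satAt π (LTL.disjList l) i ↔ ∃ φ ∈ l, LTL.satAt π φ i := by
  induction l with
  | nil => simp [LTL.disjList, LTL.fls, LTL.satAt]
  | cons a t ih =>
      simp only [LTL.disjList, List.foldr] at ih ⊢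
      simp only [LTL.satAt, ih]; simp

lemma satAt_alwEv_mono (π : ℕ → E) (φ ψ : LTL E)
    (hmono : ∀ j, LTL.satAt π φ j → LTL.satAt π ψ j) (i : ℕ)
    (h : LTL.satAt π (LTL.alwEv φ) i) : LTL.satAt π (LTL.alwEv ψ) i := by
  simp only [LTL.alwEv, LTL.alw, LTL.ev, LTL.satAt] at h ⊢
  intro hc
  apply h
  obtain ⟨k, hk, hne, hrest⟩ := hc
  refine ⟨k, hk, ?_, hrest⟩
  rintro ⟨m, hm, hφ, hT⟩
  exact hne ⟨m, hm, hmono m hφ, hT⟩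

lemma clause_filter_mono (π : ℕ → E) (cl : List (E × Bool)) (P : E × Bool → Bool) (i : ℕ)
    (h : LTL.satAt π (clauseToLTL (cl.filter P)) i) : LTL.satAt π (clauseToLTL cl) i := by
  rw [clauseToLTL, satAt_disjList] at h ⊢
  rcases h with ⟨φ, hφ, hs⟩
  simp only [List.mem_map] at hφ
  rcases hφ with ⟨lit, hlit, rfl⟩
  exact ⟨litToLTL lit, List.mem_map_of_mem (List.mem_of_mem_filter hlit), hs⟩

lemma projAssum_mono (π : ℕ → E) (L : Finset E) (c : List (List (E × Bool))) (i : ℕ)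
    (h : LTL.satAt π (cnfToLTL (projAssum L c)) i) : LTL.satAt π (cnfToLTL c) i := by
  rw [cnfToLTL, satAt_conjList] at h ⊢
  intro φ hφ
  simp only [List.mem_map] at hφ
  rcases hφ with ⟨cl, hcl, rfl⟩
  apply clause_filter_mono π cl (fun lit => decide (lit.1 ∉ L))
  exact h _ (List.mem_map_of_mem (by simp [projAssum]; exact ⟨cl, hcl, rfl⟩))

lemma projGuar_mono (π : ℕ → E) (L : Finset E) (c : List (List (E × Bool))) (i : ℕ)
    (h : LTL.satAt π (cnfToLTL c) i) : LTL.satAt π (cnfToLTL (projGuar L c)) i := by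
  rw [cnfToLTL, satAt_conjList] at h ⊢
  intro φ hφ
  simp only [List.mem_map] at hφ
  rcases hφ with ⟨cl, hcl, rfl⟩
  exact h _ (List.mem_map_of_mem (List.mem_of_mem_filter hcl))

/-- The GR(1) projection procedure yields a weaker formula. -/
theorem gr1_projection_weaker
    (SS L : Finset E) (hL : L ⊆ SS)
    (As Gs : List (List (List (E × Bool))))
    (hAs : ∀ c ∈ As, ∀ cl ∈ c, ∀ lit ∈ cl, lit.1 ∈ SS)
    (hGs : ∀ c ∈ Gs, ∀ cl ∈ c, ∀ lit ∈ cl, lit.1 ∈ SS)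
    (π : ℕ → E) (hπ : ∀ i, π i ∈ SS)
    (h : LTL.sat π (GR1 (As.map cnfToLTL) (Gs.map cnfToLTL))) :
    LTL.sat π (GR1 ((As.map (projAssum L)).map cnfToLTL)
                   ((Gs.map (projGuar L)).map cnfToLTL)) := by
  simp only [GR1, LTL.imp, LTL.sat, LTL.satAt] at h ⊢
  refine or_iff_not_imp_left.mpr ?_
  intro hA'
  rw [not_not] at hA'
  have hA : LTL.satAt π (LTL.conjList ((As.map cnfToLTL).map LTL.alwEv)) 0 := by
    rw [satAt_conjList] at hA' ⊢
    intro φ hφ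
    simp only [List.mem_map] at hφ
    rcases hφ with ⟨_, ⟨c, hc, rfl⟩, rfl⟩
    apply satAt_alwEv_mono π (cnfToLTL (projAssum L c)) _ (projAssum_mono π L c)
    exact hA' _ (by simp only [List.mem_map]; exact ⟨_, ⟨_, ⟨c, hc, rfl⟩, rfl⟩, rfl⟩)
  rcases h with h | h
  · exact absurd hA h
  · rw [satAt_conjList] at h ⊢
    intro φ hφ
    simp only [List.mem_map] at hφ
    rcases hφ with ⟨_, ⟨_, ⟨c, hc, rfl⟩, rfl⟩, rfl⟩
    apply satAt_alwEv_mono π (cnfToLTL c) _ (projGuar_mono π L c)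
    exact h _ (by simp only [List.mem_map]; exact ⟨_, ⟨c, hc, rfl⟩, rfl⟩)

end CompSynth
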